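/- Let S be a real symmetric n×n matrix whose eigenvalues λ₁ ≥ λ₂ ≥ ⋯ ≥ λ_N (counted with multiplicity) satisfy 1 > λ₁ and λ_N > 0. Let r₀ ∈ ℝⁿ be a vector whose orthogonal projection onto the eigenspace of S for the largest eigenvalue λ₁ is nonzero, and set r_k := S^k·r₀. Then the residual ratio ρ^{(k)} := ‖r_k‖₂ / ‖r_{k−1}‖₂ converges to λ₁ as k → ∞. -/

import Mathlib

open Matrix

/-- The Euclidean norm of a vector `v`: `‖v‖₂ = √(v ⋅ v)`. -/
noncomputable def euclNorm {n : ℕ} (v : Fin n → ℝ) : ℝ :=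
  Real.sqrt (v ⬝ᵥ v)

private lemma dot_sum_left {n : ℕ} (F : Fin n → (Fin n → ℝ)) (w : Fin n → ℝ) :
    (∑ i, F i) ⬝ᵥ w = ∑ i, F i ⬝ᵥ w := by
  simp only [dotProduct, Finset.sum_apply, Finset.sum_mul]
  exact Finset.sum_comm

private lemma dot_sum_right {n : ℕ} (w : Fin n → ℝ) (F : Fin n → (Fin n → ℝ)) :
    w ⬝ᵥ (∑ i, F i) = ∑ i, w ⬝ᵥ F i := by
  simp only [dotProduct, Finset.sum_apply, Finset.mul_sum]
  exact Finset.sum_comm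

private lemma euclid_sum_apply {n : ℕ} (a : Fin n → ℝ)
    (u : Fin n → EuclideanSpace ℝ (Fin n)) (j : Fin n) :
    (∑ x : Fin n, a x • u x) j = ∑ x : Fin n, a x * u x j := by
  have : (∑ x : Fin n, a x • u x) j = EuclideanSpace.proj j (∑ x : Fin n, a x • u x) := rfl
  rw [this, map_sum]
  simp [EuclideanSpace.proj]

private lemma expand_in_basis {n : ℕ}
    (u : OrthonormalBasis (Fin n) ℝ (EuclideanSpace ℝ (Fin n))) (v : Fin n → ℝ) :
    v = ∑ i, (⇑(u i) ⬝ᵥ v) • ⇑(u i) := by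
  have h := u.sum_repr' ((WithLp.equiv 2 (Fin n → ℝ)).symm v)
  have h2 : ∀ i, (inner ℝ (u i) ((WithLp.equiv 2 (Fin n → ℝ)).symm v) : ℝ) = ⇑(u i) ⬝ᵥ v := by
    intro i; simp [PiLp.inner_apply, dotProduct, PiLp.toLp_apply, mul_comm]
  calc v = ⇑((WithLp.equiv 2 (Fin n → ℝ)).symm v) := rfl
    _ = ⇑(∑ i, (inner ℝ (u i) ((WithLp.equiv 2 (Fin n → ℝ)).symm v) : ℝ) • u i) := by rw [h]
    _ = ∑ i, (⇑(u i) ⬝ᵥ v) • ⇑(u i) := by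
        simp only [h2]
        ext j
        rw [Finset.sum_apply]
        have := euclid_sum_apply (fun i => ⇑(u i) ⬝ᵥ v) (fun i => u i) j
        simp only [Pi.smul_apply, smul_eq_mul]
        exact this

/-- Let `S` be a real symmetric matrix all of whose eigenvalues lie in `(0,1)`, with
largest eigenvalue `λ₁`. If the orthogonal projection of `r₀` onto the eigenspace of
`λ₁` is nonzero (i.e. some eigenvector for `λ₁` is not orthogonal to `r₀`), then the
residual ratios `‖S^k r₀‖₂ / ‖S^{k-1} r₀‖₂` converge to `λ₁` as `k → ∞`. -/
theorem residual_ratio_tendsto_largest_eigenvalue {n : ℕ}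
    (S : Matrix (Fin n) (Fin n) ℝ) (hS : S.IsSymm)
    (lam1 : ℝ)
    (hlam1 : Module.End.HasEigenvalue (Matrix.toLin' S) lam1)
    (hmax : ∀ μ : ℝ, Module.End.HasEigenvalue (Matrix.toLin' S) μ → μ ≤ lam1)
    (heig : ∀ μ : ℝ, Module.End.HasEigenvalue (Matrix.toLin' S) μ → 0 < μ ∧ μ < 1)
    (r0 : Fin n → ℝ)
    (hproj : ∃ v : Fin n → ℝ,
      v ∈ Module.End.eigenspace (Matrix.toLin' S) lam1 ∧ v ⬝ᵥ r0 ≠ 0) :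
    Filter.Tendsto
      (fun k : ℕ => euclNorm ((S ^ (k + 1)).mulVec r0) / euclNorm ((S ^ k).mulVec r0))
      Filter.atTop (nhds lam1) := by
  classical
  have hH : S.IsHermitian := by rw [Matrix.IsHermitian]; simpa using hS.eq
  set u := hH.eigenvectorBasis with hudef
  set μ := hH.eigenvalues with hμdef
  have hUeig : ∀ i, S *ᵥ ⇑(u i) = μ i • ⇑(u i) := fun i => hH.mulVec_eigenvectorBasis i
  have hune : ∀ i, ⇑(u i) ≠ (0 : Fin n → ℝ) := by
    intro i h
    exact u.orthonormal.ne_zero i (by ext j; exact congrFun h j)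
  have hμeigval : ∀ i, Module.End.HasEigenvalue (Matrix.toLin' S) (μ i) := by
    intro i
    apply Module.End.hasEigenvalue_of_hasEigenvector (x := ⇑(u i))
    refine ⟨?_, hune i⟩
    rw [Module.End.mem_eigenspace_iff]
    simpa [Matrix.toLin'_apply] using hUeig i
  have hlam1pos : 0 < lam1 := (heig _ hlam1).1
  have hlam1ne : lam1 ≠ 0 := ne_of_gt hlam1pos
  have hμpos : ∀ i, 0 < μ i := fun i => (heig _ (hμeigval i)).1
  have hμle : ∀ i, μ i ≤ lam1 := fun i => hmax _ (hμeigval i)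
  have hortho : ∀ i j, ⇑(u i) ⬝ᵥ ⇑(u j) = if i = j then 1 else 0 := by
    intro i j
    have h1 := u.orthonormal
    rw [orthonormal_iff_ite] at h1
    simpa [PiLp.inner_apply, dotProduct, mul_comm] using h1 i j
  have hdotsum : ∀ (a b : Fin n → ℝ),
      (∑ i, a i • ⇑(u i)) ⬝ᵥ (∑ i, b i • ⇑(u i)) = ∑ i, a i * b i := by
    intro a b
    rw [dot_sum_left]
    simp only [smul_dotProduct, dot_sum_right, dotProduct_smul,
      hortho, smul_eq_mul, mul_ite, mul_one, mul_zero, Finset.mul_sum]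
    refine Finset.sum_congr rfl fun i _ => ?_
    simp
  set c : Fin n → ℝ := fun i => ⇑(u i) ⬝ᵥ r0 with hcdef
  have hr0 : r0 = ∑ i, c i • ⇑(u i) := expand_in_basis u r0
  have hmulvec_sum : ∀ (a : Fin n → ℝ),
      S *ᵥ (∑ i, a i • ⇑(u i)) = ∑ i, (a i * μ i) • ⇑(u i) := by
    intro a
    have h1 : S *ᵥ (∑ i, a i • ⇑(u i)) = ∑ i, S *ᵥ (a i • ⇑(u i)) := by
      have := map_sum (Matrix.mulVecLin S) (fun i => a i • ⇑(u i)) Finset.univ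
      simpa only [Matrix.mulVecLin_apply] using this
    rw [h1]
    refine Finset.sum_congr rfl fun i _ => ?_
    rw [Matrix.mulVec_smul, hUeig i, smul_smul]
  have hpow : ∀ k : ℕ, (S ^ k) *ᵥ r0 = ∑ i, (μ i ^ k * c i) • ⇑(u i) := by
    intro k
    induction k with
    | zero => simpa using hr0
    | succ k ih =>
      have h1 : (S ^ (k + 1)) *ᵥ r0 = S *ᵥ ((S ^ k) *ᵥ r0) := by
        rw [pow_succ', Matrix.mulVec_mulVec]
      rw [h1, ih, hmulvec_sum]
      refine Finset.sum_congr rfl fun i _ => ?_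
      rw [pow_succ]
      ring_nf
  set f : ℕ → ℝ := fun k => ∑ i, c i ^ 2 * (μ i ^ 2) ^ k with hfdef
  have hf : ∀ k : ℕ, ((S ^ k) *ᵥ r0) ⬝ᵥ ((S ^ k) *ᵥ r0) = f k := by
    intro k
    rw [hpow k, hdotsum]
    refine Finset.sum_congr rfl fun i _ => ?_
    rw [← pow_mul, mul_comm 2 k, pow_mul]
    ring
  -- special index
  obtain ⟨v, hvmem, hvne⟩ := hproj
  have hveq : S *ᵥ v = lam1 • v := by
    rw [Module.End.mem_eigenspace_iff] at hvmem
    simpa [Matrix.toLin'_apply] using hvmem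
  set d : Fin n → ℝ := fun i => ⇑(u i) ⬝ᵥ v with hddef
  have hv : v = ∑ i, d i • ⇑(u i) := expand_in_basis u v
  have hd : ∀ i, μ i ≠ lam1 → d i = 0 := by
    intro i hne
    have h1 : S *ᵥ v = ∑ j, (d j * μ j) • ⇑(u j) := by rw [hv] at hveq ⊢; rw [hmulvec_sum]
    have h2 : (∑ j, (d j * μ j) • ⇑(u j)) = ∑ j, (lam1 * d j) • ⇑(u j) := by
      rw [← h1, hveq, hv, Finset.smul_sum]
      refine Finset.sum_congr rfl fun j _ => ?_
      rw [smul_smul]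
    have h3 : d i * μ i = lam1 * d i := by
      have e1 := congrArg (fun w => w ⬝ᵥ ⇑(u i)) h2
      simp only [dot_sum_left, smul_dotProduct, hortho, smul_eq_mul, mul_ite,
        mul_one, mul_zero, Finset.sum_ite_eq', Finset.mem_univ, if_true] at e1
      exact e1
    by_contra hdne
    apply hne
    have : d i * μ i - lam1 * d i = 0 := by rw [h3]; ring
    have h4 : d i * (μ i - lam1) = 0 := by ring_nf; ring_nf at this; linarith
    rcases mul_eq_zero.mp h4 with h | h
    · exact absurd h hdne
    · linarith
  have hdc : ∃ i, μ i = lam1 ∧ c i ≠ 0 := by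
    have hvr : v ⬝ᵥ r0 = ∑ i, d i * c i := by
      rw [hv, dot_sum_left]
      refine Finset.sum_congr rfl fun i _ => ?_
      rw [smul_dotProduct, smul_eq_mul]
    rw [hvr] at hvne
    obtain ⟨i, _, hi⟩ := Finset.exists_ne_zero_of_sum_ne_zero hvne
    refine ⟨i, ?_, fun h => hi (by rw [h, mul_zero])⟩
    by_contra hne
    exact hi (by rw [hd i hne, zero_mul])
  obtain ⟨i₀, hi₀eq, hi₀ne⟩ := hdc
  -- normalized sums
  set g : ℕ → ℝ := fun k => ∑ i, c i ^ 2 * ((μ i / lam1) ^ 2) ^ k with hgdef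
  have hfg : ∀ k, f k = (lam1 ^ 2) ^ k * g k := by
    intro k
    rw [hfdef, hgdef, Finset.mul_sum]
    refine Finset.sum_congr rfl fun i _ => ?_
    have hstep : ((μ i / lam1) ^ 2) ^ k = (μ i ^ 2) ^ k / (lam1 ^ 2) ^ k := by
      rw [div_pow, div_pow]
    rw [hstep]
    have hne1 : ((lam1 ^ 2 : ℝ)) ^ k ≠ 0 := by positivity
    field_simp
  set C : ℝ := ∑ i, (if μ i = lam1 then c i ^ 2 else 0) with hCdef
  have hCpos : 0 < C := by
    rw [hCdef]
    refine Finset.sum_pos' (fun i _ => by positivity) ⟨i₀, Finset.mem_univ _, ?_⟩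
    rw [if_pos hi₀eq]
    positivity
  have hgtend : Filter.Tendsto g Filter.atTop (nhds C) := by
    rw [hgdef, hCdef]
    apply tendsto_finset_sum
    intro i _
    by_cases h : μ i = lam1
    · rw [if_pos h]
      have he : (fun k : ℕ => c i ^ 2 * ((μ i / lam1) ^ 2) ^ k) = fun _ => c i ^ 2 := by
        funext k; rw [h, div_self hlam1ne]; simp
      rw [he]; exact tendsto_const_nhds
    · rw [if_neg h]
      have hlt : (μ i / lam1) ^ 2 < 1 := by
        have h1 : 0 < μ i / lam1 := div_pos (hμpos i) hlam1pos
        have h2 : μ i / lam1 < 1 := (div_lt_one hlam1pos).2 (lt_of_le_of_ne (hμle i) h)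
        nlinarith
      have hge : (0:ℝ) ≤ (μ i / lam1) ^ 2 := by positivity
      have h5 := (tendsto_pow_atTop_nhds_zero_of_lt_one hge hlt).const_mul (c i ^ 2)
      simpa using h5
  have hgpos : ∀ k, 0 < g k := by
    intro k
    rw [hgdef]
    refine Finset.sum_pos' (fun i _ => by positivity) ⟨i₀, Finset.mem_univ _, ?_⟩
    have hq : μ i₀ / lam1 = 1 := by rw [hi₀eq, div_self hlam1ne]
    rw [hq]
    simp only [one_pow, mul_one]
    positivity
  have hfpos : ∀ k, 0 < f k := by
    intro k
    rw [hfg k]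
    have : (0:ℝ) < (lam1 ^ 2) ^ k := by positivity
    exact mul_pos this (hgpos k)
  -- ratio of f's
  have hratio : ∀ k, f (k + 1) / f k = lam1 ^ 2 * (g (k + 1) / g k) := by
    intro k
    rw [hfg (k + 1), hfg k, pow_succ]
    have hne1 : ((lam1 ^ 2) ^ k : ℝ) ≠ 0 := by positivity
    have hne2 : g k ≠ 0 := ne_of_gt (hgpos k)
    field_simp
  have hgtend1 : Filter.Tendsto (fun k => g (k + 1)) Filter.atTop (nhds C) :=
    hgtend.comp (Filter.tendsto_add_atTop_nat 1)
  have hdivtend : Filter.Tendsto (fun k => f (k + 1) / f k) Filter.atTop (nhds (lam1 ^ 2)) := by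
    have h1 : Filter.Tendsto (fun k => g (k + 1) / g k) Filter.atTop (nhds (C / C)) :=
      hgtend1.div hgtend (ne_of_gt hCpos)
    rw [div_self (ne_of_gt hCpos)] at h1
    have h2 := h1.const_mul (lam1 ^ 2)
    simp only [mul_one] at h2
    have he : (fun k => f (k + 1) / f k) = fun k => lam1 ^ 2 * (g (k + 1) / g k) := by
      funext k; exact hratio k
    rw [he]
    exact h2
  -- conclude
  have hfun : (fun k : ℕ => euclNorm ((S ^ (k + 1)).mulVec r0) / euclNorm ((S ^ k).mulVec r0))
      = fun k => Real.sqrt (f (k + 1) / f k) := by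
    funext k
    rw [euclNorm, euclNorm, hf (k + 1), hf k,
      Real.sqrt_div (le_of_lt (hfpos (k + 1)))]
  rw [hfun]
  have hcont := (Real.continuous_sqrt.tendsto (lam1 ^ 2)).comp hdivtend
  have : Real.sqrt (lam1 ^ 2) = lam1 := by
    rw [Real.sqrt_sq (le_of_lt hlam1pos)]
  rw [this] at hcont
  exact hcont
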